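/- Let (X,d) be a finite metric space with n points, of p-negative type, and let D_p = [d(x_i,x_j)^p] be its p-distance matrix. If D_p is of strict negative type (⟨D_p α, α⟩ < 0 for all nonzero α with ⟨α,1⟩ = 0), then D_p is invertible. -/

import Mathlib

open Matrix

/-- If the `p`-distance matrix of a finite metric space (of `p`-negative type)
is of strict negative type, then it is invertible. -/
theorem strict_neg_type_invertible {n : ℕ} (hn : 2 ≤ n) {X : Type*} [MetricSpace X]
    (x : Fin n ≃ X) (p : ℝ) (hp : 0 ≤ p)
    (D : Matrix (Fin n) (Fin n) ℝ)
    (hD : ∀ i j, D i j = if i = j then 0 else dist (x i) (x j) ^ p)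
    (hneg : ∀ α : Fin n → ℝ, α ⬝ᵥ 1 = 0 → D.mulVec α ⬝ᵥ α ≤ 0)
    (hstrict : ∀ α : Fin n → ℝ, α ≠ 0 → α ⬝ᵥ 1 = 0 → D.mulVec α ⬝ᵥ α < 0) :
    IsUnit D := by
  have hsym : Dᵀ = D := by
    ext i j
    by_cases h : i = j <;>
      simp [Matrix.transpose_apply, hD, h, eq_comm, dist_comm (x i) (x j)]
  by_contra hU
  have hdet : D.det = 0 := by
    by_contra h
    exact hU ((Matrix.isUnit_iff_isUnit_det D).mpr (isUnit_iff_ne_zero.mpr h))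
  obtain ⟨α, hα0, hαD⟩ := (Matrix.exists_mulVec_eq_zero_iff).mpr hdet
  by_cases hs0 : α ⬝ᵥ 1 = 0
  · exact absurd (hstrict α hα0 hs0) (by simp [hαD])
  · -- the quadratic form is ≤ 0 everywhere
    have key : ∀ v : Fin n → ℝ, D.mulVec v ⬝ᵥ v ≤ 0 := by
      intro v
      set t := (v ⬝ᵥ 1) / (α ⬝ᵥ 1) with ht
      set β := v - t • α with hβ
      have hβ1 : β ⬝ᵥ 1 = 0 := by
        simp only [hβ, sub_dotProduct, smul_dotProduct, smul_eq_mul, ht]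
        field_simp
        ring
      have hveq : v = β + t • α := by simp [hβ]
      have hmul : D.mulVec v = D.mulVec β := by
        rw [hveq, Matrix.mulVec_add, Matrix.mulVec_smul, hαD, smul_zero, add_zero]
      have hcross : D.mulVec β ⬝ᵥ α = 0 := by
        rw [dotProduct_comm, Matrix.dotProduct_mulVec, ← Matrix.mulVec_transpose,
          hsym, hαD]
        simp
      calc D.mulVec v ⬝ᵥ v
          = D.mulVec β ⬝ᵥ β + t * (D.mulVec β ⬝ᵥ α) := by
            rw [hmul, hveq, dotProduct_add, dotProduct_smul, smul_eq_mul]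
        _ = D.mulVec β ⬝ᵥ β := by rw [hcross, mul_zero, add_zero]
        _ ≤ 0 := hneg β hβ1
    -- apply it to e₀ + e₁
    have h0 : (0 : ℕ) < n := by omega
    have h1 : (1 : ℕ) < n := by omega
    set i0 : Fin n := ⟨0, h0⟩
    set i1 : Fin n := ⟨1, h1⟩
    have hne : i0 ≠ i1 := by simp [i0, i1, Fin.ext_iff]
    have hqv : D.mulVec (Pi.single i0 (1:ℝ) + Pi.single i1 1) ⬝ᵥ
        (Pi.single i0 (1:ℝ) + Pi.single i1 1) = 2 * D i0 i1 := by
      rw [Matrix.mulVec_add, Matrix.mulVec_single, Matrix.mulVec_single]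
      simp only [dotProduct_add, add_dotProduct, dotProduct_single,
        Pi.add_apply, mul_one]
      have h00 : D i0 i0 = 0 := by rw [hD]; simp
      have h11 : D i1 i1 = 0 := by rw [hD]; simp
      have h10 : D i1 i0 = D i0 i1 := by
        rw [hD, hD, if_neg hne, if_neg (Ne.symm hne), dist_comm]
      simp [h00, h11, h10]
      ring
    have hpos : 0 < D i0 i1 := by
      rw [hD, if_neg hne]
      exact Real.rpow_pos_of_pos (dist_pos.mpr (fun h => hne (x.injective h))) p
    have := key (Pi.single i0 (1:ℝ) + Pi.single i1 1)
    rw [hqv] at this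
    linarith
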